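/- arXiv:1410.5015 — 2 statements merged into one kernel-verified Lean document; each statement's English description precedes it below -/
import Mathlib

section
/- Let Γ be a finite tree and let Γ_1 and Γ_2 be subtrees of Γ whose union is Γ and whose intersection is the single vertex A (they share the vertex A and no other vertex and no edge). Then z^0(Γ, A) = z^0(Γ_1, A) · z^0(Γ_2, A). -/
open SimpleGraph

/-- `F` is the edge set of a rooted subtree (a connected subgraph containing the root `A`,
determined by its edge set) of the graph `G`. -/
def IsRootedSubtree {V : Type*} (G : SimpleGraph V) (A : V) (F : Set (Sym2 V)) : Prop :=
  F ⊆ G.edgeSet ∧ ∀ v : V, (∃ e ∈ F, v ∈ e) → (SimpleGraph.fromEdgeSet F).Reachable A v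

-- `z⁰(G, A) = Σ_{Γ'} (-1)^{|E(Γ')|}`, the sum running over all rooted subtrees `Γ'` of `G`
-- with root `A`, including the single-vertex subtree with empty edge set.
open scoped Classical in
noncomputable def z0 {V : Type*} [Fintype V] [DecidableEq V]
    (G : SimpleGraph V) (A : V) : ℤ :=
  ∑ F : Finset (Sym2 V), if IsRootedSubtree G A ↑F then (-1 : ℤ) ^ F.card else 0

/-- If `F` is a rooted subtree of a tree `G` and `G₁ ≤ G` is a subtree containing `A`,
then `F ∩ E(G₁)` is a rooted subtree of `G₁`. -/
lemma isRootedSubtree_inter {V : Type*} (G G₁ : SimpleGraph V) (A : V)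
    (hG : G.IsTree) (h₁ : G₁ ≤ G)
    (hconn₁ : ∀ w ∈ G₁.support, G₁.Reachable A w)
    (F : Set (Sym2 V)) (hF : IsRootedSubtree G A F) :
    IsRootedSubtree G₁ A (F ∩ G₁.edgeSet) := by
  classical
  constructor
  · exact Set.inter_subset_right
  · rintro v ⟨e, ⟨heF, heE₁⟩, hve⟩
    -- `v` is in the support of `G₁`
    have hvsupp : v ∈ G₁.support := by
      induction e with
      | h x y =>
        rw [SimpleGraph.mem_edgeSet] at heE₁
        rw [SimpleGraph.mem_support]
        rcases Sym2.mem_iff.mp hve with rfl | rfl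
        · exact ⟨y, heE₁⟩
        · exact ⟨x, heE₁.symm⟩
    -- a path from `A` to `v` in `G₁`
    obtain ⟨q⟩ := hconn₁ v hvsupp
    set q' : G₁.Path A v := q.toPath with hq'
    -- a path from `A` to `v` in `fromEdgeSet F`
    obtain ⟨p⟩ := hF.2 v ⟨e, heF, hve⟩
    set p' : (SimpleGraph.fromEdgeSet F).Path A v := p.toPath with hp'
    have hle : SimpleGraph.fromEdgeSet F ≤ G := by
      conv_rhs => rw [← SimpleGraph.fromEdgeSet_edgeSet G]
      exact SimpleGraph.fromEdgeSet_mono hF.1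
    -- map both paths to `G`; by uniqueness of paths in a tree they coincide
    have h1 : ((p' : (SimpleGraph.fromEdgeSet F).Walk A v).mapLe hle).IsPath :=
      SimpleGraph.Walk.IsPath.mapLe hle p'.2
    have h2 : ((q' : G₁.Walk A v).mapLe h₁).IsPath :=
      SimpleGraph.Walk.IsPath.mapLe h₁ q'.2
    have huniq := hG.existsUnique_path A v
    have heqw : (p' : (SimpleGraph.fromEdgeSet F).Walk A v).mapLe hle
        = (q' : G₁.Walk A v).mapLe h₁ :=
      huniq.unique h1 h2
    -- hence the edges of `p'` lie in `F ∩ E(G₁)`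
    have hedges1 : ((p' : (SimpleGraph.fromEdgeSet F).Walk A v).mapLe hle).edges
        = (p' : (SimpleGraph.fromEdgeSet F).Walk A v).edges := by
      have hid : Sym2.map ⇑(SimpleGraph.Hom.ofLE hle) = id := by
        funext e'; induction e' with | h x y => simp
      simp [SimpleGraph.Walk.mapLe, SimpleGraph.Walk.edges_map, hid, List.map_id]
    have hedges2 : ((q' : G₁.Walk A v).mapLe h₁).edges
        = (q' : G₁.Walk A v).edges := by
      have hid : Sym2.map ⇑(SimpleGraph.Hom.ofLE h₁) = id := by
        funext e'; induction e' with | h x y => simp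
      simp [SimpleGraph.Walk.mapLe, SimpleGraph.Walk.edges_map, hid, List.map_id]
    have hsub : ∀ e' ∈ (p' : (SimpleGraph.fromEdgeSet F).Walk A v).edges,
        e' ∈ (SimpleGraph.fromEdgeSet (F ∩ G₁.edgeSet)).edgeSet := by
      intro e' he'
      have heF' : e' ∈ (SimpleGraph.fromEdgeSet F).edgeSet :=
        SimpleGraph.Walk.edges_subset_edgeSet _ he'
      rw [SimpleGraph.edgeSet_fromEdgeSet] at heF'
      have heG₁ : e' ∈ G₁.edgeSet := by
        have : e' ∈ (q' : G₁.Walk A v).edges := by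
          rw [← hedges2, ← heqw, hedges1]; exact he'
        exact SimpleGraph.Walk.edges_subset_edgeSet _ this
      rw [SimpleGraph.edgeSet_fromEdgeSet]
      exact ⟨⟨heF'.1, heG₁⟩, heF'.2⟩
    exact ⟨(p' : (SimpleGraph.fromEdgeSet F).Walk A v).transfer _ hsub⟩

/-- Rooted subtrees of `G₁` and `G₂` combine to a rooted subtree of `G₁ ⊔ G₂`. -/
lemma isRootedSubtree_union {V : Type*} (G₁ G₂ : SimpleGraph V) (A : V)
    (s t : Set (Sym2 V)) (hs : IsRootedSubtree G₁ A s) (ht : IsRootedSubtree G₂ A t) :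
    IsRootedSubtree (G₁ ⊔ G₂) A (s ∪ t) := by
  constructor
  · rw [SimpleGraph.edgeSet_sup]
    exact Set.union_subset_union hs.1 ht.1
  · rintro v ⟨e, he, hve⟩
    rcases he with he | he
    · exact (hs.2 v ⟨e, he, hve⟩).mono
        (SimpleGraph.fromEdgeSet_mono Set.subset_union_left)
    · exact (ht.2 v ⟨e, he, hve⟩).mono
        (SimpleGraph.fromEdgeSet_mono Set.subset_union_right)

/-- if a finite tree `G` is the union of two subtrees `G₁`, `G₂` that intersect
exactly in the single vertex `A` (they share the vertex `A` and no other vertex and no edge),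
then `z⁰(G, A) = z⁰(G₁, A) * z⁰(G₂, A)`. -/
theorem z0_union_eq_mul {V : Type*} [Fintype V] [DecidableEq V]
    (G G₁ G₂ : SimpleGraph V) (A : V)
    (hG : G.IsTree)
    (h₁ : G₁ ≤ G) (h₂ : G₂ ≤ G)
    (hunion : G₁ ⊔ G₂ = G)
    (hedge_disj : G₁.edgeSet ∩ G₂.edgeSet = ∅)
    (hvert : G₁.support ∩ G₂.support ⊆ {A})
    (hconn₁ : ∀ w ∈ G₁.support, G₁.Reachable A w)
    (hconn₂ : ∀ w ∈ G₂.support, G₂.Reachable A w) :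
    z0 G A = z0 G₁ A * z0 G₂ A := by
  classical
  have hEdecomp : G.edgeSet = G₁.edgeSet ∪ G₂.edgeSet := by
    rw [← hunion, SimpleGraph.edgeSet_sup]
  -- rewrite all three sums as sums over filtered finsets
  have hz : ∀ (H : SimpleGraph V), z0 H A =
      ∑ F ∈ Finset.univ.filter (fun F : Finset (Sym2 V) => IsRootedSubtree H A ↑F),
        (-1 : ℤ) ^ F.card := by
    intro H
    rw [z0, Finset.sum_filter]
  rw [hz G, hz G₁, hz G₂, Finset.sum_mul_sum]
  have hsp : ∑ p ∈ (Finset.univ.filter (fun F : Finset (Sym2 V) => IsRootedSubtree G₁ A ↑F))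
        ×ˢ (Finset.univ.filter (fun F : Finset (Sym2 V) => IsRootedSubtree G₂ A ↑F)),
        ((-1 : ℤ) ^ p.1.card * (-1 : ℤ) ^ p.2.card)
      = ∑ F₁ ∈ Finset.univ.filter (fun F : Finset (Sym2 V) => IsRootedSubtree G₁ A ↑F),
        ∑ F₂ ∈ Finset.univ.filter (fun F : Finset (Sym2 V) => IsRootedSubtree G₂ A ↑F),
        ((-1 : ℤ) ^ F₁.card * (-1 : ℤ) ^ F₂.card) :=
    Finset.sum_product' _ _ fun F₁ F₂ : Finset (Sym2 V) => (-1 : ℤ) ^ F₁.card * (-1 : ℤ) ^ F₂.card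
  rw [← hsp]
  have key : ∑ F ∈ Finset.univ.filter (fun F : Finset (Sym2 V) => IsRootedSubtree G A ↑F),
        (-1 : ℤ) ^ F.card
      = ∑ p ∈ (Finset.univ.filter (fun F : Finset (Sym2 V) => IsRootedSubtree G₁ A ↑F))
        ×ˢ (Finset.univ.filter (fun F : Finset (Sym2 V) => IsRootedSubtree G₂ A ↑F)),
        ((-1 : ℤ) ^ p.1.card * (-1 : ℤ) ^ p.2.card) := by
    refine Finset.sum_nbij' (i := fun F : Finset (Sym2 V) =>
        (F.filter (· ∈ G₁.edgeSet), F.filter (· ∈ G₂.edgeSet)))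
      (j := fun p : Finset (Sym2 V) × Finset (Sym2 V) => p.1 ∪ p.2)
      ?_ ?_ ?_ ?_ ?_
    · -- forward membership
      intro F hF
      rw [Finset.mem_filter] at hF
      have hF' := hF.2
      rw [Finset.mem_product, Finset.mem_filter, Finset.mem_filter]
      constructor
      · refine ⟨Finset.mem_univ _, ?_⟩
        have := isRootedSubtree_inter G G₁ A hG h₁ hconn₁ ↑F hF'
        convert this using 2
        ext e; simp
      · refine ⟨Finset.mem_univ _, ?_⟩
        have := isRootedSubtree_inter G G₂ A hG h₂ hconn₂ ↑F hF'
        convert this using 2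
        ext e; simp
    · -- backward membership
      rintro ⟨F₁, F₂⟩ hp
      rw [Finset.mem_product, Finset.mem_filter, Finset.mem_filter] at hp
      rw [Finset.mem_filter]
      refine ⟨Finset.mem_univ _, ?_⟩
      have := isRootedSubtree_union G₁ G₂ A ↑F₁ ↑F₂ hp.1.2 hp.2.2
      rw [hunion] at this
      convert this using 1
      simp
    · -- left inverse
      intro F hF
      rw [Finset.mem_filter] at hF
      have hsub : ↑F ⊆ G.edgeSet := hF.2.1
      ext e
      simp only [Finset.mem_union, Finset.mem_filter]
      constructor
      · rintro (⟨h, _⟩ | ⟨h, _⟩) <;> exact h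
      · intro h
        have := hsub h
        rw [hEdecomp] at this
        rcases this with h' | h'
        · exact Or.inl ⟨h, h'⟩
        · exact Or.inr ⟨h, h'⟩
    · -- right inverse
      rintro ⟨F₁, F₂⟩ hp
      rw [Finset.mem_product, Finset.mem_filter, Finset.mem_filter] at hp
      have hs1 : ↑F₁ ⊆ G₁.edgeSet := hp.1.2.1
      have hs2 : ↑F₂ ⊆ G₂.edgeSet := hp.2.2.1
      have hdisj : ∀ e : Sym2 V, e ∈ G₁.edgeSet → e ∈ G₂.edgeSet → False := by
        intro e he1 he2
        have : e ∈ G₁.edgeSet ∩ G₂.edgeSet := ⟨he1, he2⟩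
        rw [hedge_disj] at this
        exact this
      have h1 : (F₁ ∪ F₂).filter (· ∈ G₁.edgeSet) = F₁ := by
        ext e
        simp only [Finset.mem_filter, Finset.mem_union]
        constructor
        · rintro ⟨h | h, hE⟩
          · exact h
          · exact (hdisj e hE (hs2 h)).elim
        · intro h
          exact ⟨Or.inl h, hs1 h⟩
      have h2 : (F₁ ∪ F₂).filter (· ∈ G₂.edgeSet) = F₂ := by
        ext e
        simp only [Finset.mem_filter, Finset.mem_union]
        constructor
        · rintro ⟨h | h, hE⟩
          · exact (hdisj e (hs1 h) hE).elim
          · exact h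
        · intro h
          exact ⟨Or.inr h, hs2 h⟩
      simp [h1, h2]
    · -- values agree
      intro F hF
      rw [Finset.mem_filter] at hF
      have hsub : ↑F ⊆ G.edgeSet := hF.2.1
      have hdisj : Disjoint (F.filter (· ∈ G₁.edgeSet)) (F.filter (· ∈ G₂.edgeSet)) := by
        rw [Finset.disjoint_left]
        intro e he1 he2
        rw [Finset.mem_filter] at he1 he2
        have : e ∈ G₁.edgeSet ∩ G₂.edgeSet := ⟨he1.2, he2.2⟩
        rw [hedge_disj] at this
        exact this
      have hcover : F.filter (· ∈ G₁.edgeSet) ∪ F.filter (· ∈ G₂.edgeSet) = F := by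
        ext e
        simp only [Finset.mem_union, Finset.mem_filter]
        constructor
        · rintro (⟨h, _⟩ | ⟨h, _⟩) <;> exact h
        · intro h
          have := hsub h
          rw [hEdecomp] at this
          rcases this with h' | h'
          · exact Or.inl ⟨h, h'⟩
          · exact Or.inr ⟨h, h'⟩
      have hcard : (F.filter (· ∈ G₁.edgeSet)).card + (F.filter (· ∈ G₂.edgeSet)).card
          = F.card := by
        rw [← Finset.card_union_of_disjoint hdisj, hcover]
      simp only []
      rw [← hcard, pow_add]

  rw [key]
end

section
/- Let Γ be a finite tree, let A be a vertex of Γ of degree n with incident edges e_1,…,e_n, and for each i let Γ_{e_i} be the branch at e_i, i.e., the maximal subtree of Γ containing A and the edge e_i but none of the edges e_j for j ≠ i. Let (t_e)_{e∈E(Γ)} be positive edge weights. Then there exists a constant C such that for all real T ≥ 0, B(Γ, A, T) = Σ_{∅ ≠ G ⊆ E(Γ)} c_G · W((2t_e)_{e∈G}; T) + C, where for a nonempty subset G meeting exactly the branches Γ_{e_{i_1}},…,Γ_{e_{i_k}} one has c_G := (Π_{j=1}^{k} z(Γ_{e_{i_j}}, G ∩ E(Γ_{e_{i_j}}), A)) ·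 Σ_{j=0}^{n−k−1} (n−k−j) · σ_j((z_i)_{i ∉ {i_1,…,i_k}}), with z_i := z(Γ_{e_i}, ∅, A) and σ_j the j-th elementary symmetric polynomial of the listed n−k values (when k = n the empty sum makes c_G = 0). -/
open SimpleGraph

-- `z(G, Gs, A) = (-1)^{|Gs|} Σ_{Γ'} (-1)^{|E(Γ')|}`, the sum running over all rooted subtrees
-- `Γ'` of `G` (root `A`) with nonempty edge set containing `Gs`.
open scoped Classical in
noncomputable def zrel {V : Type*} [Fintype V] [DecidableEq V]
    (G : SimpleGraph V) (A : V) (Gs : Finset (Sym2 V)) : ℤ :=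
  (-1 : ℤ) ^ Gs.card *
    ∑ F : Finset (Sym2 V),
      if F.Nonempty ∧ Gs ⊆ F ∧ IsRootedSubtree G A ↑F then (-1 : ℤ) ^ F.card else 0

/-- `W((2 t_e)_{e ∈ F}; T)`: the number of tuples of nonnegative integers `(n_e)_{e ∈ F}`
with `∑_{e ∈ F} n_e · (2 t_e) ≤ T`. -/
noncomputable def Wfin {V : Type*} (F : Finset (Sym2 V)) (t : Sym2 V → ℝ) (T : ℝ) : ℕ :=
  Nat.card {n : Sym2 V → ℕ |
    (∀ e ∉ F, n e = 0) ∧ ∑ e ∈ F, (n e : ℝ) * (2 * t e) ≤ T}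

-- `B(G, A, T)`: the sum, over all pairs `(Γ', n)` where `Γ'` is a rooted subtree (root `A`)
-- with nonempty edge set `F` and `n` assigns a positive integer to every edge of `Γ'` with
-- `∑_{e ∈ F} 2 n_e t_e ≤ T`, of the weight `deg A - r(Γ')`, where `r(Γ')` is the number of
-- edges of `Γ'` incident to `A`.
open scoped Classical in
noncomputable def Bcount {V : Type*} [Fintype V] [DecidableEq V]
    (G : SimpleGraph V) (A : V) (t : Sym2 V → ℝ) (T : ℝ) : ℤ :=
  ∑ F : Finset (Sym2 V),
    if IsRootedSubtree G A ↑F ∧ F.Nonempty then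
      ((Nat.card {w : V | G.Adj A w} : ℤ) - ((F.filter (fun e => A ∈ e)).card : ℤ)) *
        (Nat.card {n : Sym2 V → ℕ |
          (∀ e ∈ F, 1 ≤ n e) ∧ (∀ e ∉ F, n e = 0) ∧
          ∑ e ∈ F, (n e : ℝ) * (2 * t e) ≤ T} : ℤ)
    else 0

-- The coefficient `c_F` of Theorem 1: if the nonempty edge set `F` meets exactly the branches
-- `Γ i` for `i ∈ I`, `|I| = k`, then
-- `c_F = (Π_{i ∈ I} z(Γ i, F ∩ E(Γ i), A)) · Σ_{j=0}^{n-k-1} (n - k - j) σ_j((z_i)_{i ∉ I})`,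
-- where `z_i = z(Γ i, ∅, A)` and `σ_j` is the `j`-th elementary symmetric polynomial.
open scoped Classical in
noncomputable def cCoef {V : Type*} [Fintype V] [DecidableEq V]
    (n : ℕ) (Γ : Fin n → SimpleGraph V) (A : V) (F : Finset (Sym2 V)) : ℤ :=
  let I : Finset (Fin n) := Finset.univ.filter fun i => ∃ e ∈ F, e ∈ (Γ i).edgeSet
  (∏ i ∈ I, zrel (Γ i) A (F.filter fun e => e ∈ (Γ i).edgeSet)) *
    ∑ j ∈ Finset.range (n - I.card),
      ((n : ℤ) - (I.card : ℤ) - (j : ℤ)) *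
        ∑ S ∈ Iᶜ.powersetCard j, ∏ i ∈ S, zrel (Γ i) A ∅

namespace BAux

open Finset

variable {V : Type*} [Fintype V] [DecidableEq V]

open scoped Classical






/-- counting positive tuples -/
noncomputable def Pcard (F : Finset (Sym2 V)) (t : Sym2 V → ℝ) (T : ℝ) : ℕ :=
  Nat.card {n : Sym2 V → ℕ |
    (∀ e ∈ F, 1 ≤ n e) ∧ (∀ e ∉ F, n e = 0) ∧ ∑ e ∈ F, (n e : ℝ) * (2 * t e) ≤ T}

lemma finite_W (F : Finset (Sym2 V)) (t : Sym2 V → ℝ) (ht : ∀ e ∈ F, 0 < t e) (T : ℝ) :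
    {n : Sym2 V → ℕ | (∀ e ∉ F, n e = 0) ∧ ∑ e ∈ F, (n e : ℝ) * (2 * t e) ≤ T}.Finite := by
  set B := F.sup fun e => ⌈T / (2 * t e)⌉₊ with hB
  apply (Set.finite_Icc (fun _ : Sym2 V => 0) (fun _ => B)).subset
  rintro n ⟨h0, hsum⟩
  refine ⟨fun e => Nat.zero_le _, fun e => ?_⟩
  by_cases he : e ∈ F
  · have hpos : 0 < 2 * t e := by have := ht e he; linarith
    have h1 : (n e : ℝ) * (2 * t e) ≤ T := by
      refine le_trans (Finset.single_le_sum (f := fun e => (n e : ℝ) * (2 * t e)) ?_ he) hsum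
      intro i hi
      have := ht i hi
      positivity
    have h2 : (n e : ℝ) ≤ T / (2 * t e) := (le_div_iff₀ hpos).mpr h1
    have h3 : (n e : ℝ) ≤ (⌈T / (2 * t e)⌉₊ : ℝ) := h2.trans (Nat.le_ceil _)
    have h4 : n e ≤ ⌈T / (2 * t e)⌉₊ := by exact_mod_cast h3
    have h5 : ⌈T / (2 * t e)⌉₊ ≤ B := Finset.le_sup (f := fun e => ⌈T / (2 * t e)⌉₊) he
    exact h4.trans h5
  · simp [h0 e he]

lemma Wfin_eq_sum (F : Finset (Sym2 V)) (t : Sym2 V → ℝ) (ht : ∀ e ∈ F, 0 < t e) (T : ℝ) :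
    (Nat.card {n : Sym2 V → ℕ |
      (∀ e ∉ F, n e = 0) ∧ ∑ e ∈ F, (n e : ℝ) * (2 * t e) ≤ T})
      = ∑ X ∈ F.powerset, Pcard X t T := by
  have hS := finite_W F t ht T
  rw [Nat.card_eq_card_finite_toFinset hS]
  rw [Finset.card_eq_sum_card_fiberwise
    (f := fun n : Sym2 V → ℕ => F.filter fun e => n e ≠ 0) (t := F.powerset)
    (fun x _ => Finset.mem_powerset.mpr (Finset.filter_subset _ _))]
  refine Finset.sum_congr rfl fun X hX => ?_
  rw [Finset.mem_powerset] at hX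
  have htX : ∀ e ∈ X, 0 < t e := fun e he => ht e (hX he)
  have hPfin : {n : Sym2 V → ℕ |
      (∀ e ∈ X, 1 ≤ n e) ∧ (∀ e ∉ X, n e = 0) ∧ ∑ e ∈ X, (n e : ℝ) * (2 * t e) ≤ T}.Finite :=
    (finite_W X t htX T).subset fun n hn => ⟨hn.2.1, hn.2.2⟩
  rw [Pcard, Nat.card_eq_card_finite_toFinset hPfin]
  congr 1
  ext m
  simp only [Finset.mem_filter, Set.Finite.mem_toFinset, Set.mem_setOf_eq]
  constructor
  · rintro ⟨⟨h0, hsum⟩, hXX⟩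
    have h1 : ∀ e ∈ X, 1 ≤ m e := by
      intro e he
      rw [← hXX] at he
      exact Nat.one_le_iff_ne_zero.mpr (Finset.mem_filter.mp he).2
    have h2 : ∀ e ∉ X, m e = 0 := by
      intro e he
      by_cases heF : e ∈ F
      · by_contra hne
        exact he (hXX ▸ Finset.mem_filter.mpr ⟨heF, hne⟩)
      · exact h0 e heF
    refine ⟨h1, h2, ?_⟩
    have : ∑ e ∈ X, (m e : ℝ) * (2 * t e) = ∑ e ∈ F, (m e : ℝ) * (2 * t e) := by
      refine Finset.sum_subset hX ?_
      intro e _ heX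
      rw [h2 e heX]
      simp
    linarith [hsum, this.ge]
  · rintro ⟨h1, h2, hsum⟩
    have h0 : ∀ e ∉ F, m e = 0 := fun e he => h2 e (fun heX => he (hX heX))
    have hsum' : ∑ e ∈ F, (m e : ℝ) * (2 * t e) = ∑ e ∈ X, (m e : ℝ) * (2 * t e) := by
      symm
      refine Finset.sum_subset hX ?_
      intro e _ heX
      rw [h2 e heX]
      simp
    refine ⟨⟨h0, by linarith [hsum, hsum'.le]⟩, ?_⟩
    ext e
    simp only [Finset.mem_filter]
    constructor
    · rintro ⟨heF, hne⟩
      by_contra heX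
      exact hne (h2 e heX)
    · intro heX
      exact ⟨hX heX, Nat.one_le_iff_ne_zero.mp (h1 e heX)⟩

lemma Pcard_empty (t : Sym2 V → ℝ) {T : ℝ} (hT : 0 ≤ T) :
    Pcard (∅ : Finset (Sym2 V)) t T = 1 := by
  have : {n : Sym2 V → ℕ |
      (∀ e ∈ (∅ : Finset (Sym2 V)), 1 ≤ n e) ∧ (∀ e ∉ (∅ : Finset (Sym2 V)), n e = 0) ∧
      ∑ e ∈ (∅ : Finset (Sym2 V)), (n e : ℝ) * (2 * t e) ≤ T}
      = {(fun _ => 0 : Sym2 V → ℕ)} := by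
    ext m
    simp only [Set.mem_setOf_eq, Set.mem_singleton_iff, Finset.notMem_empty, funext_iff]
    constructor
    · rintro ⟨_, h2, _⟩
      exact fun e => h2 e (by simp)
    · intro h
      exact ⟨fun e he => absurd he (by simp), fun e _ => h e, by simp [hT]⟩
  rw [Pcard, this]
  exact Nat.card_unique







lemma isRootedSubtree_empty (G : SimpleGraph V) (A : V) :
    IsRootedSubtree G A (↑(∅ : Finset (Sym2 V))) := by
  constructor
  · simp
  · rintro x ⟨e, he, -⟩
    simp at he

lemma mem_support_of_mem_edge {H : SimpleGraph V} {e : Sym2 V} {x : V}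
    (he : e ∈ H.edgeSet) (hx : x ∈ e) : x ∈ H.support := by
  induction e with
  | _ a b =>
    rw [Sym2.mem_iff] at hx
    rw [SimpleGraph.mem_edgeSet] at he
    rcases hx with rfl | rfl
    · exact ⟨b, he⟩
    · exact ⟨a, he.symm⟩

lemma alt_sum (X F' : Finset (Sym2 V)) :
    (∑ F : Finset (Sym2 V), if X ⊆ F ∧ F ⊆ F' then (-1 : ℤ) ^ F.card else 0)
      = if F' = X then (-1 : ℤ) ^ X.card else 0 := by
  by_cases hXF : X ⊆ F'
  · have hstep : (∑ F : Finset (Sym2 V), if X ⊆ F ∧ F ⊆ F' then (-1 : ℤ) ^ F.card else 0)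
        = ∑ S ∈ (F' \ X).powerset, (-1 : ℤ) ^ (X ∪ S).card := by
      rw [← Finset.sum_filter]
      refine Finset.sum_nbij' (i := fun Y => Y \ X) (j := fun S => X ∪ S) ?_ ?_ ?_ ?_ ?_
      · intro Y hY
        rw [Finset.mem_filter] at hY
        rw [Finset.mem_powerset]
        exact Finset.sdiff_subset_sdiff hY.2.2 (Finset.Subset.refl X)
      · intro S hS
        rw [Finset.mem_powerset] at hS
        rw [Finset.mem_filter]
        exact ⟨Finset.mem_univ _, Finset.subset_union_left,
          Finset.union_subset hXF (hS.trans Finset.sdiff_subset)⟩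
      · intro Y hY
        rw [Finset.mem_filter] at hY
        exact Finset.union_sdiff_of_subset hY.2.1
      · intro S hS
        rw [Finset.mem_powerset] at hS
        exact Finset.union_sdiff_cancel_left
          ((Finset.sdiff_disjoint (s := X) (t := F')).symm.mono_right hS)
      · intro Y hY
        rw [Finset.mem_filter] at hY
        rw [Finset.union_sdiff_of_subset hY.2.1]
    rw [hstep]
    have hcongr : ∀ S ∈ (F' \ X).powerset,
        (-1 : ℤ) ^ (X ∪ S).card = (-1 : ℤ) ^ X.card * (-1 : ℤ) ^ S.card := by
      intro S hS
      rw [Finset.mem_powerset] at hS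
      rw [← pow_add]
      congr 1
      exact Finset.card_union_of_disjoint
        ((Finset.sdiff_disjoint (s := X) (t := F')).symm.mono_right hS)
    rw [Finset.sum_congr rfl hcongr, ← Finset.mul_sum, Finset.sum_powerset_neg_one_pow_card]
    by_cases h0 : F' = X
    · subst h0
      simp
    · have hne : F' \ X ≠ ∅ := by
        rw [Ne, Finset.sdiff_eq_empty_iff_subset]
        intro h
        exact h0 (Finset.Subset.antisymm h hXF)
      rw [if_neg hne, if_neg h0, mul_zero]
  · rw [if_neg (fun h => hXF (by rw [h]))]
    apply Finset.sum_eq_zero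
    intro Y _
    exact if_neg (fun hc => hXF (hc.1.trans hc.2))

lemma sym_id {n : ℕ} (S : Finset (Fin n)) (z : Fin n → ℤ) :
    (∑ i ∈ S, ∏ j ∈ S.erase i, (1 + z j))
      = ∑ j ∈ Finset.range S.card, ((S.card : ℤ) - (j : ℤ)) * ∑ T ∈ S.powersetCard j, ∏ k ∈ T, z k := by
  have hR : (∑ j ∈ Finset.range S.card, ((S.card : ℤ) - (j : ℤ)) * ∑ T ∈ S.powersetCard j, ∏ k ∈ T, z k)
      = ∑ T ∈ S.powerset, ((S.card : ℤ) - (T.card : ℤ)) * ∏ k ∈ T, z k := by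
    rw [Finset.powerset_card_disjiUnion]; refine Eq.trans ?_ (Finset.sum_disjiUnion _ _ _).symm
    have hlast : ((S.card : ℤ) - (S.card : ℤ)) * ∑ T ∈ S.powersetCard S.card, ∏ k ∈ T, z k = 0 := by
      ring
    have hinner : ∀ j ∈ Finset.range (S.card + 1),
        (∑ T ∈ S.powersetCard j, ((S.card : ℤ) - (T.card : ℤ)) * ∏ k ∈ T, z k)
          = ((S.card : ℤ) - (j : ℤ)) * ∑ T ∈ S.powersetCard j, ∏ k ∈ T, z k := by
      intro j _
      rw [Finset.mul_sum]
      refine Finset.sum_congr rfl fun T hT => ?_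
      rw [(Finset.mem_powersetCard.mp hT).2]
    rw [Finset.sum_congr rfl hinner, Finset.sum_range_succ, hlast, add_zero]
  rw [hR]
  have hprod : ∀ i ∈ S, (∏ j ∈ S.erase i, (1 + z j)) = ∑ T ∈ (S.erase i).powerset, ∏ k ∈ T, z k := by
    intro i _
    calc ∏ j ∈ S.erase i, (1 + z j) = ∏ j ∈ S.erase i, (z j + 1) := by
          refine Finset.prod_congr rfl fun j _ => ?_
          ring
      _ = ∑ T ∈ (S.erase i).powerset, (∏ k ∈ T, z k) * ∏ k ∈ (S.erase i) \ T, (1 : ℤ) :=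
          Finset.prod_add _ _ _
      _ = ∑ T ∈ (S.erase i).powerset, ∏ k ∈ T, z k := by simp
  rw [Finset.sum_congr rfl hprod]
  rw [Finset.sum_comm' (s' := fun T => S \ T) (t' := S.powerset) (by
    intro i T
    simp only [Finset.mem_powerset, Finset.mem_sdiff, Finset.subset_erase]
    tauto)]
  refine Finset.sum_congr rfl fun T hT => ?_
  rw [Finset.mem_powerset] at hT
  rw [Finset.sum_const, Finset.card_sdiff_of_subset hT, nsmul_eq_mul]
  congr 1
  push_cast [Nat.cast_sub (Finset.card_le_card hT)]
  ring




lemma mobius (G : SimpleGraph V) (A : V) (n : ℕ) {X : Finset (Sym2 V)} (hXne : X.Nonempty) :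
    (∑ F : Finset (Sym2 V),
      if ((↑F : Set (Sym2 V)) ⊆ G.edgeSet ∧ F.Nonempty) ∧ X ⊆ F then
        ((-1 : ℤ) ^ F.card) * (∑ F' : Finset (Sym2 V),
          if IsRootedSubtree G A ↑F' ∧ F ⊆ F' then
            ((n : ℤ) - ((F'.filter fun e => A ∈ e).card : ℤ)) * (-1 : ℤ) ^ F'.card
          else 0)
      else 0)
    = (if IsRootedSubtree G A ↑X then
        ((n : ℤ) - ((X.filter fun e => A ∈ e).card : ℤ)) else 0) := by
  have hstep1 : ∀ F : Finset (Sym2 V),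
      (if ((↑F : Set (Sym2 V)) ⊆ G.edgeSet ∧ F.Nonempty) ∧ X ⊆ F then
        ((-1 : ℤ) ^ F.card) * (∑ F' : Finset (Sym2 V),
          if IsRootedSubtree G A ↑F' ∧ F ⊆ F' then
            ((n : ℤ) - ((F'.filter fun e => A ∈ e).card : ℤ)) * (-1 : ℤ) ^ F'.card
          else 0) else 0)
      = ∑ F' : Finset (Sym2 V),
          (if IsRootedSubtree G A ↑F' ∧ (X ⊆ F ∧ F ⊆ F') then
            (((n : ℤ) - ((F'.filter fun e => A ∈ e).card : ℤ)) * (-1 : ℤ) ^ F'.card)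
              * (-1 : ℤ) ^ F.card
          else 0) := by
    intro F
    by_cases hXF : X ⊆ F
    · by_cases hFE : (↑F : Set (Sym2 V)) ⊆ G.edgeSet
      · rw [if_pos ⟨⟨hFE, hXne.mono hXF⟩, hXF⟩, Finset.mul_sum]
        refine Finset.sum_congr rfl fun F' _ => ?_
        by_cases hc : IsRootedSubtree G A ↑F' ∧ F ⊆ F'
        · rw [if_pos hc, if_pos ⟨hc.1, hXF, hc.2⟩]
          ring
        · rw [if_neg hc, mul_zero, if_neg (fun hc2 => hc ⟨hc2.1, hc2.2.2⟩)]
      · rw [if_neg (fun hc => hFE hc.1.1)]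
        symm
        apply Finset.sum_eq_zero
        intro F' _
        apply if_neg
        rintro ⟨hRST, -, hFF'⟩
        exact hFE (fun e he => hRST.1 (Finset.mem_coe.mpr (hFF' (Finset.mem_coe.mp he))))
    · rw [if_neg (fun hc => hXF hc.2)]
      symm
      apply Finset.sum_eq_zero
      intro F' _
      exact if_neg (fun hc => hXF hc.2.1)
  rw [Finset.sum_congr rfl fun F _ => hstep1 F, Finset.sum_comm]
  have hstep3 : ∀ F' : Finset (Sym2 V),
      (∑ F : Finset (Sym2 V),
        if IsRootedSubtree G A ↑F' ∧ (X ⊆ F ∧ F ⊆ F') then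
          (((n : ℤ) - ((F'.filter fun e => A ∈ e).card : ℤ)) * (-1 : ℤ) ^ F'.card)
            * (-1 : ℤ) ^ F.card
        else 0)
      = if F' = X then
          (if IsRootedSubtree G A ↑X then
            ((n : ℤ) - ((X.filter fun e => A ∈ e).card : ℤ)) else 0) else 0 := by
    intro F'
    by_cases hRST : IsRootedSubtree G A ↑F'
    · have hm : (∑ F : Finset (Sym2 V),
          if IsRootedSubtree G A ↑F' ∧ (X ⊆ F ∧ F ⊆ F') then
            (((n : ℤ) - ((F'.filter fun e => A ∈ e).card : ℤ)) * (-1 : ℤ) ^ F'.card)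
              * (-1 : ℤ) ^ F.card
          else 0)
          = (((n : ℤ) - ((F'.filter fun e => A ∈ e).card : ℤ)) * (-1 : ℤ) ^ F'.card)
            * ∑ F : Finset (Sym2 V), (if X ⊆ F ∧ F ⊆ F' then (-1 : ℤ) ^ F.card else 0) := by
        rw [Finset.mul_sum]
        refine Finset.sum_congr rfl fun F _ => ?_
        by_cases hc : X ⊆ F ∧ F ⊆ F'
        · rw [if_pos ⟨hRST, hc⟩, if_pos hc]
        · rw [if_neg (fun h => hc h.2), if_neg hc, mul_zero]
      rw [hm, alt_sum X F']
      by_cases hFX : F' = X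
      · subst hFX
        rw [if_pos rfl, if_pos rfl, if_pos hRST]
        rw [mul_assoc, ← pow_add]
        rw [Even.neg_one_pow ⟨_, rfl⟩, mul_one]
      · rw [if_neg hFX, mul_zero, if_neg hFX]
    · rw [Finset.sum_eq_zero fun F _ => if_neg (fun hc => hRST hc.1)]
      by_cases hFX : F' = X
      · subst hFX
        rw [if_pos rfl, if_neg hRST]
      · rw [if_neg hFX]
  rw [Finset.sum_congr rfl fun F' _ => hstep3 F']
  rw [Finset.sum_ite_eq' Finset.univ X]
  rw [if_pos (Finset.mem_univ X)]

section Graph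

variable {G : SimpleGraph V} {A : V} {n : ℕ} {v : Fin n → V} {Γ : Fin n → SimpleGraph V}

lemma reachable_filter (hG : G.IsTree) (hle : ∀ i, Γ i ≤ G)
    (hconn : ∀ i, ∀ w ∈ (Γ i).support, (Γ i).Reachable A w)
    {F' : Finset (Sym2 V)} (hRST : IsRootedSubtree G A ↑F') (i : Fin n)
    {e : Sym2 V} {x : V} (heF : e ∈ F') (heΓ : e ∈ (Γ i).edgeSet) (hxe : x ∈ e) :
    (fromEdgeSet ↑(F'.filter fun e => e ∈ (Γ i).edgeSet)).Reachable A x := by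
  have hFE : (↑F' : Set (Sym2 V)) ⊆ G.edgeSet := hRST.1
  obtain ⟨p⟩ := hRST.2 x ⟨e, Finset.mem_coe.mpr heF, hxe⟩
  set q : (fromEdgeSet (↑F' : Set (Sym2 V))).Walk A x := p.toPath.val with hqdef
  have hqp : q.IsPath := p.toPath.prop
  have hqe : ∀ e' ∈ q.edges, e' ∈ (fromEdgeSet (↑F' : Set (Sym2 V))).edgeSet :=
    fun e' he' => q.edges_subset_edgeSet he'
  have hqF : ∀ e' ∈ q.edges, e' ∈ F' := by
    intro e' he'
    have := hqe e' he'
    rw [edgeSet_fromEdgeSet] at this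
    exact Finset.mem_coe.mp this.1
  have hqG : ∀ e' ∈ q.edges, e' ∈ G.edgeSet := fun e' he' => hFE (hqF e' he')
  have hxs : x ∈ (Γ i).support := mem_support_of_mem_edge heΓ hxe
  obtain ⟨r0⟩ := hconn i x hxs
  set r : (Γ i).Walk A x := r0.toPath.val with hrdef
  have hrp : r.IsPath := r0.toPath.prop
  have hre : ∀ e' ∈ r.edges, e' ∈ (Γ i).edgeSet := fun e' he' => r.edges_subset_edgeSet he'
  have hrG : ∀ e' ∈ r.edges, e' ∈ G.edgeSet :=
    fun e' he' => (edgeSet_mono (hle i)) (hre e' he')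
  obtain ⟨p₀, -, huniq⟩ := hG.existsUnique_path A x
  have h1 : q.transfer G hqG = p₀ := huniq _ (hqp.transfer hqG)
  have h2 : r.transfer G hrG = p₀ := huniq _ (hrp.transfer hrG)
  have hedges : q.edges = r.edges := by
    have := congrArg SimpleGraph.Walk.edges (h1.trans h2.symm)
    rwa [SimpleGraph.Walk.edges_transfer, SimpleGraph.Walk.edges_transfer] at this
  have hq2 : ∀ e' ∈ q.edges,
      e' ∈ (fromEdgeSet (↑(F'.filter fun e => e ∈ (Γ i).edgeSet) : Set (Sym2 V))).edgeSet := by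
    intro e' he'
    rw [edgeSet_fromEdgeSet]
    refine ⟨Finset.mem_coe.mpr (Finset.mem_filter.mpr ⟨hqF e' he', ?_⟩), ?_⟩
    · exact hre e' (hedges ▸ he')
    · have := hqe e' he'
      rw [edgeSet_fromEdgeSet] at this
      exact this.2
  exact ⟨q.transfer _ hq2⟩

lemma isRootedSubtree_iff (hG : G.IsTree) (hle : ∀ i, Γ i ≤ G)
    (hcover : ∀ e ∈ G.edgeSet, ∃ i, e ∈ (Γ i).edgeSet)
    (hconn : ∀ i, ∀ w ∈ (Γ i).support, (Γ i).Reachable A w)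
    {F' : Finset (Sym2 V)} (hFE : (↑F' : Set (Sym2 V)) ⊆ G.edgeSet) :
    IsRootedSubtree G A ↑F' ↔
      ∀ i, IsRootedSubtree (Γ i) A ↑(F'.filter fun e => e ∈ (Γ i).edgeSet) := by
  constructor
  · intro h i
    constructor
    · intro e he
      rw [Finset.mem_coe, Finset.mem_filter] at he
      exact he.2
    · rintro x ⟨e, he, hxe⟩
      rw [Finset.mem_coe, Finset.mem_filter] at he
      exact reachable_filter hG hle hconn h i he.1 he.2 hxe
  · intro h
    refine ⟨hFE, ?_⟩
    rintro x ⟨e, he, hxe⟩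
    rw [Finset.mem_coe] at he
    obtain ⟨i, hi⟩ := hcover e (hFE he)
    have hre := (h i).2 x ⟨e, Finset.mem_coe.mpr (Finset.mem_filter.mpr ⟨he, hi⟩), hxe⟩
    refine SimpleGraph.Reachable.mono (fromEdgeSet_mono ?_) hre
    intro a ha
    rw [Finset.mem_coe, Finset.mem_filter] at ha
    exact Finset.mem_coe.mpr ha.1

lemma rootEdge_mem_of_nonempty (hbranch : ∀ i, ∀ w : V, (Γ i).Adj A w ↔ w = v i)
    {i : Fin n} {X : Finset (Sym2 V)}
    (hRST : IsRootedSubtree (Γ i) A ↑X) (hne : X.Nonempty) : s(A, v i) ∈ X := by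
  obtain ⟨e, he⟩ := hne
  induction e with
  | _ a b =>
    have hx : a ∈ s(a, b) := Sym2.mem_mk_left a b
    obtain ⟨p⟩ := hRST.2 a ⟨s(a, b), Finset.mem_coe.mpr he, hx⟩
    cases p with
    | nil =>
      have hadj : (Γ i).Adj A b := ((Γ i).mem_edgeSet).mp (hRST.1 (Finset.mem_coe.mpr he))
      rw [hbranch i b] at hadj
      rw [← hadj]
      exact he
    | @cons _ w _ h p' =>
      rw [fromEdgeSet_adj] at h
      have hadj : (Γ i).Adj A w := ((Γ i).mem_edgeSet).mp (hRST.1 h.1)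
      rw [hbranch i w] at hadj
      rw [← hadj]
      exact Finset.mem_coe.mp h.1

lemma biUnion_filter_eq (hcover : ∀ e ∈ G.edgeSet, ∃ i, e ∈ (Γ i).edgeSet)
    {F' : Finset (Sym2 V)} (hFE : (↑F' : Set (Sym2 V)) ⊆ G.edgeSet) :
    Finset.univ.biUnion (fun i => F'.filter fun e => e ∈ (Γ i).edgeSet) = F' := by
  ext e
  simp only [Finset.mem_biUnion, Finset.mem_filter, Finset.mem_univ, true_and]
  constructor
  · rintro ⟨i, he, -⟩
    exact he
  · intro he
    obtain ⟨i, hi⟩ := hcover e (hFE (Finset.mem_coe.mpr he))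
    exact ⟨i, he, hi⟩

lemma filters_disjoint (hdisj : ∀ i j, i ≠ j → (Γ i).edgeSet ∩ (Γ j).edgeSet = ∅)
    {F' : Finset (Sym2 V)} {i j : Fin n} (hij : i ≠ j) :
    Disjoint (F'.filter fun e => e ∈ (Γ i).edgeSet) (F'.filter fun e => e ∈ (Γ j).edgeSet) := by
  rw [Finset.disjoint_left]
  intro e hei hej
  have h1 := (Finset.mem_filter.mp hei).2
  have h2 := (Finset.mem_filter.mp hej).2
  have : e ∈ (Γ i).edgeSet ∩ (Γ j).edgeSet := ⟨h1, h2⟩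
  rw [hdisj i j hij] at this
  exact this

lemma card_filter_sum (hdisj : ∀ i j, i ≠ j → (Γ i).edgeSet ∩ (Γ j).edgeSet = ∅)
    (hcover : ∀ e ∈ G.edgeSet, ∃ i, e ∈ (Γ i).edgeSet)
    {F' : Finset (Sym2 V)} (hFE : (↑F' : Set (Sym2 V)) ⊆ G.edgeSet) :
    ∑ i : Fin n, (F'.filter fun e => e ∈ (Γ i).edgeSet).card = F'.card := by
  have h := Finset.card_biUnion (s := (Finset.univ : Finset (Fin n)))
    (t := fun i => F'.filter fun e => e ∈ (Γ i).edgeSet)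
    (fun x _ y _ hxy => filters_disjoint hdisj hxy)
  rw [biUnion_filter_eq hcover hFE] at h
  exact h.symm

lemma card_rootEdges (hG : G.IsTree) (hle : ∀ i, Γ i ≤ G) (hv : Function.Injective v)
    (hbranch : ∀ i, ∀ w : V, (Γ i).Adj A w ↔ w = v i)
    (hcover : ∀ e ∈ G.edgeSet, ∃ i, e ∈ (Γ i).edgeSet)
    (hconn : ∀ i, ∀ w ∈ (Γ i).support, (Γ i).Reachable A w)
    {F' : Finset (Sym2 V)} (hFE : (↑F' : Set (Sym2 V)) ⊆ G.edgeSet)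
    (hRST : IsRootedSubtree G A ↑F') :
    (F'.filter fun e => A ∈ e).card
      = (Finset.univ.filter fun i => (F'.filter fun e => e ∈ (Γ i).edgeSet).Nonempty).card := by
  have himg : F'.filter (fun e => A ∈ e)
      = (Finset.univ.filter fun i => (F'.filter fun e => e ∈ (Γ i).edgeSet).Nonempty).image
          (fun i => s(A, v i)) := by
    ext e
    simp only [Finset.mem_filter, Finset.mem_image, Finset.mem_univ, true_and]
    constructor
    · rintro ⟨heF, hAe⟩
      obtain ⟨w, rfl⟩ := Sym2.mem_iff_exists.mp hAe
      obtain ⟨j, hj⟩ := hcover _ (hFE (Finset.mem_coe.mpr heF))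
      have hw : w = v j := (hbranch j w).mp (((Γ j).mem_edgeSet).mp hj)
      subst hw
      exact ⟨j, ⟨s(A, v j), Finset.mem_filter.mpr ⟨heF, hj⟩⟩, rfl⟩
    · rintro ⟨i, hne, rfl⟩
      have hRSTi := (isRootedSubtree_iff hG hle hcover hconn hFE).mp hRST i
      have hmem := rootEdge_mem_of_nonempty hbranch hRSTi hne
      exact ⟨(Finset.mem_filter.mp hmem).1, Sym2.mem_mk_left _ _⟩
  rw [himg, Finset.card_image_of_injOn]
  intro i _ j _ hij
  exact hv (Sym2.congr_right.mp hij)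


lemma sum_factor (hle : ∀ i, Γ i ≤ G)
    (hdisj : ∀ i j, i ≠ j → (Γ i).edgeSet ∩ (Γ j).edgeSet = ∅)
    (hcover : ∀ e ∈ G.edgeSet, ∃ i, e ∈ (Γ i).edgeSet)
    (φ : Fin n → Finset (Sym2 V) → ℤ)
    (hφ : ∀ (i : Fin n) (X : Finset (Sym2 V)), ¬((↑X : Set (Sym2 V)) ⊆ (Γ i).edgeSet) → φ i X = 0) :
    (∑ F' : Finset (Sym2 V), if (↑F' : Set (Sym2 V)) ⊆ G.edgeSet then
        ∏ i, φ i (F'.filter fun e => e ∈ (Γ i).edgeSet) else 0)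
      = ∏ i, ∑ X : Finset (Sym2 V), φ i X := by
  have hEi : ∀ i : Fin n, (∑ X : Finset (Sym2 V), φ i X)
      = ∑ X ∈ (Finset.univ.filter fun e => e ∈ (Γ i).edgeSet).powerset, φ i X := by
    intro i
    symm
    apply Finset.sum_subset (Finset.subset_univ _)
    intro X _ hX
    apply hφ
    intro hsub
    apply hX
    rw [Finset.mem_powerset]
    intro e he
    exact Finset.mem_filter.mpr ⟨Finset.mem_univ e, hsub (Finset.mem_coe.mpr he)⟩
  rw [Finset.prod_congr rfl (fun i _ => hEi i), Finset.prod_univ_sum, ← Finset.sum_filter]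
  refine Finset.sum_nbij' (i := fun F' => fun i => F'.filter fun e => e ∈ (Γ i).edgeSet)
    (j := fun p => Finset.univ.biUnion p) ?_ ?_ ?_ ?_ ?_
  · intro F' hF'
    rw [Finset.mem_filter] at hF'
    rw [Fintype.mem_piFinset]
    intro i
    rw [Finset.mem_powerset]
    intro e he
    rw [Finset.mem_filter] at he
    exact Finset.mem_filter.mpr ⟨Finset.mem_univ e, he.2⟩
  · intro p hp
    rw [Fintype.mem_piFinset] at hp
    rw [Finset.mem_filter]
    refine ⟨Finset.mem_univ _, ?_⟩
    intro e he
    rw [Finset.mem_coe, Finset.mem_biUnion] at he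
    obtain ⟨i, -, hei⟩ := he
    have := Finset.mem_powerset.mp (hp i) hei
    rw [Finset.mem_filter] at this
    exact edgeSet_mono (hle i) this.2
  · intro F' hF'
    rw [Finset.mem_filter] at hF'
    exact biUnion_filter_eq hcover hF'.2
  · intro p hp
    rw [Fintype.mem_piFinset] at hp
    funext i
    ext e
    simp only [Finset.mem_filter, Finset.mem_biUnion, Finset.mem_univ, true_and]
    constructor
    · rintro ⟨⟨j, hej⟩, hei⟩
      have hEj : e ∈ (Γ j).edgeSet := by
        have := Finset.mem_powerset.mp (hp j) hej
        exact (Finset.mem_filter.mp this).2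
      by_cases hij : j = i
      · rw [← hij]; exact hej
      · exfalso
        have : e ∈ (Γ j).edgeSet ∩ (Γ i).edgeSet := ⟨hEj, hei⟩
        rw [hdisj j i hij] at this
        exact this
    · intro he
      refine ⟨⟨i, he⟩, ?_⟩
      have := Finset.mem_powerset.mp (hp i) he
      exact (Finset.mem_filter.mp this).2
  · intro F' _
    rfl



lemma dF_eq (hG : G.IsTree) (hv : Function.Injective v)
    (hle : ∀ i, Γ i ≤ G)
    (hbranch : ∀ i, ∀ w : V, (Γ i).Adj A w ↔ w = v i)
    (hdisj : ∀ i j, i ≠ j → (Γ i).edgeSet ∩ (Γ j).edgeSet = ∅)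
    (hcover : ∀ e ∈ G.edgeSet, ∃ i, e ∈ (Γ i).edgeSet)
    (hconn : ∀ i, ∀ w ∈ (Γ i).support, (Γ i).Reachable A w)
    {F : Finset (Sym2 V)} (hFE : (↑F : Set (Sym2 V)) ⊆ G.edgeSet) (hFne : F.Nonempty) :
    ((-1 : ℤ) ^ F.card) * (∑ F' : Finset (Sym2 V),
        if IsRootedSubtree G A ↑F' ∧ F ⊆ F' then
          ((n : ℤ) - ((F'.filter fun e => A ∈ e).card : ℤ)) * (-1 : ℤ) ^ F'.card
        else 0)
      = cCoef n Γ A F := by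
  simp only [cCoef]
  set I : Finset (Fin n) := Finset.univ.filter (fun i => ∃ e ∈ F, e ∈ (Γ i).edgeSet) with hIdef
  set a : Fin n → ℤ := fun j => ∑ X : Finset (Sym2 V),
    if IsRootedSubtree (Γ j) A ↑X ∧ (F.filter fun e => e ∈ (Γ j).edgeSet) ⊆ X
    then (-1 : ℤ) ^ X.card else 0 with hadef
  set ψ : Fin n → Fin n → Finset (Sym2 V) → ℤ := fun i j X =>
    (if j = i then (if X = ∅ then 1 else 0) else 1) *
      (if IsRootedSubtree (Γ j) A ↑X ∧ (F.filter fun e => e ∈ (Γ j).edgeSet) ⊆ X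
       then (-1 : ℤ) ^ X.card else 0) with hψdef
  have hIc : ∀ i : Fin n, ((F.filter fun e => e ∈ (Γ i).edgeSet) = ∅) ↔ i ∈ Iᶜ := by
    intro i
    simp only [Finset.mem_compl, hIdef, Finset.mem_filter, Finset.mem_univ, true_and,
      Finset.filter_eq_empty_iff, not_exists, not_and]
  have hpoint : ∀ F' : Finset (Sym2 V),
      (if IsRootedSubtree G A ↑F' ∧ F ⊆ F' then
        ((n : ℤ) - ((F'.filter fun e => A ∈ e).card : ℤ)) * (-1 : ℤ) ^ F'.card else 0)
      = ∑ i : Fin n, (if (↑F' : Set (Sym2 V)) ⊆ G.edgeSet then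
          ∏ j, ψ i j (F'.filter fun e => e ∈ (Γ j).edgeSet) else 0) := by
    intro F'
    by_cases hFE' : (↑F' : Set (Sym2 V)) ⊆ G.edgeSet
    · by_cases hcond : IsRootedSubtree G A ↑F' ∧ F ⊆ F'
      · have hbr : ∀ j, IsRootedSubtree (Γ j) A ↑(F'.filter fun e => e ∈ (Γ j).edgeSet) ∧
            (F.filter fun e => e ∈ (Γ j).edgeSet) ⊆ (F'.filter fun e => e ∈ (Γ j).edgeSet) :=
          fun j => ⟨(isRootedSubtree_iff hG hle hcover hconn hFE').mp hcond.1 j,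
            Finset.filter_subset_filter _ hcond.2⟩
        rw [if_pos hcond]
        have hψval : ∀ i j : Fin n, ψ i j (F'.filter fun e => e ∈ (Γ j).edgeSet)
            = (if j = i then (if (F'.filter fun e => e ∈ (Γ j).edgeSet) = ∅ then 1 else 0) else 1)
              * (-1 : ℤ) ^ (F'.filter fun e => e ∈ (Γ j).edgeSet).card := by
          intro i j
          simp only [hψdef]
          rw [if_pos (hbr j)]
        have hmain : (∑ i : Fin n, if (↑F' : Set (Sym2 V)) ⊆ G.edgeSet then
              ∏ j, ψ i j (F'.filter fun e => e ∈ (Γ j).edgeSet) else 0)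
            = ∑ i : Fin n, (if (F'.filter fun e => e ∈ (Γ i).edgeSet) = ∅ then (1 : ℤ) else 0)
                * (-1 : ℤ) ^ F'.card := by
          refine Finset.sum_congr rfl fun i _ => ?_
          rw [if_pos hFE']
          rw [Finset.prod_congr rfl (fun j _ => hψval i j), Finset.prod_mul_distrib]
          congr 1
          · rw [Finset.prod_ite_eq' Finset.univ i
              (fun j => if (F'.filter fun e => e ∈ (Γ j).edgeSet) = ∅ then (1 : ℤ) else 0)]
            rw [if_pos (Finset.mem_univ i)]
          · rw [Finset.prod_pow_eq_pow_sum, card_filter_sum hdisj hcover hFE']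
        rw [hmain, ← Finset.sum_mul]
        congr 1
        have hr := card_rootEdges hG hle hv hbranch hcover hconn hFE' hcond.1
        have h1 : (∑ i : Fin n, if (F'.filter fun e => e ∈ (Γ i).edgeSet) = ∅ then (1 : ℤ) else 0)
            = ((Finset.univ.filter fun i =>
                (F'.filter fun e => e ∈ (Γ i).edgeSet) = ∅).card : ℤ) := by
          rw [Finset.sum_boole]
        have h2 : (Finset.univ.filter fun i => (F'.filter fun e => e ∈ (Γ i).edgeSet) = ∅).card
            + (Finset.univ.filter fun i =>
                (F'.filter fun e => e ∈ (Γ i).edgeSet).Nonempty).card = n := by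
          have h4 : (Finset.univ.filter fun i =>
              (F'.filter fun e => e ∈ (Γ i).edgeSet).Nonempty)
              = (Finset.univ.filter fun i =>
                ¬ (F'.filter fun e => e ∈ (Γ i).edgeSet) = ∅) := by
            ext i
            simp [Finset.nonempty_iff_ne_empty]
          rw [h4]
          have h3 := Finset.card_filter_add_card_filter_not
            (s := (Finset.univ : Finset (Fin n)))
            (p := fun i => (F'.filter fun e => e ∈ (Γ i).edgeSet) = ∅)
          rw [Finset.card_univ, Fintype.card_fin] at h3
          exact h3
        rw [hr, h1]
        omega
      · rw [if_neg hcond]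
        symm
        apply Finset.sum_eq_zero
        intro i _
        rw [if_pos hFE']
        have hnall : ¬ ∀ j, IsRootedSubtree (Γ j) A ↑(F'.filter fun e => e ∈ (Γ j).edgeSet) ∧
            (F.filter fun e => e ∈ (Γ j).edgeSet) ⊆ (F'.filter fun e => e ∈ (Γ j).edgeSet) := by
          intro hall'
          apply hcond
          constructor
          · exact (isRootedSubtree_iff hG hle hcover hconn hFE').mpr (fun j => (hall' j).1)
          · intro e he
            obtain ⟨j, hj⟩ := hcover e (hFE (Finset.mem_coe.mpr he))
            have h5 : e ∈ F.filter (fun e => e ∈ (Γ j).edgeSet) := Finset.mem_filter.mpr ⟨he, hj⟩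
            exact Finset.filter_subset _ _ ((hall' j).2 h5)
        rw [not_forall] at hnall
        obtain ⟨j, hj⟩ := hnall
        refine Finset.prod_eq_zero (Finset.mem_univ j) ?_
        simp only [hψdef]
        rw [if_neg hj, mul_zero]
    · rw [if_neg (fun hc => hFE' hc.1.1)]
      symm
      exact Finset.sum_eq_zero fun i _ => if_neg hFE'
  rw [Finset.sum_congr rfl fun F' _ => hpoint F']
  rw [Finset.sum_comm]
  have hfac : ∀ i : Fin n,
      (∑ F' : Finset (Sym2 V), if (↑F' : Set (Sym2 V)) ⊆ G.edgeSet then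
        ∏ j, ψ i j (F'.filter fun e => e ∈ (Γ j).edgeSet) else 0)
      = ∏ j, ∑ X : Finset (Sym2 V), ψ i j X := by
    intro i
    refine sum_factor hle hdisj hcover (ψ i) ?_
    intro j X hX
    have h0 : (if IsRootedSubtree (Γ j) A ↑X ∧ (F.filter fun e => e ∈ (Γ j).edgeSet) ⊆ X
        then (-1 : ℤ) ^ X.card else 0) = 0 := if_neg (fun hc => hX hc.1.1)
    simp only [hψdef, h0, mul_zero]
  rw [Finset.sum_congr rfl fun i _ => hfac i]
  have hsum_ne : ∀ i j : Fin n, j ≠ i → (∑ X : Finset (Sym2 V), ψ i j X) = a j := by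
    intro i j hij
    simp only [hψdef, hadef]
    refine Finset.sum_congr rfl fun X _ => ?_
    rw [if_neg hij, one_mul]
  have hsum_eq : ∀ i : Fin n, (∑ X : Finset (Sym2 V), ψ i i X)
      = (if (F.filter fun e => e ∈ (Γ i).edgeSet) = ∅ then 1 else 0) := by
    intro i
    have hstep : ∀ X : Finset (Sym2 V), ψ i i X = if X = ∅ then
        (if IsRootedSubtree (Γ i) A ↑X ∧ (F.filter fun e => e ∈ (Γ i).edgeSet) ⊆ X
          then (-1 : ℤ) ^ X.card else 0) else 0 := by
      intro X
      simp only [hψdef, eq_self_iff_true, if_true]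
      by_cases hX : X = ∅
      · rw [if_pos hX, if_pos hX, one_mul]
      · rw [if_neg hX, if_neg hX, zero_mul]
    rw [Finset.sum_congr rfl fun X _ => hstep X]
    rw [Finset.sum_ite_eq' Finset.univ (∅ : Finset (Sym2 V))]
    rw [if_pos (Finset.mem_univ _)]
    by_cases hFi : (F.filter fun e => e ∈ (Γ i).edgeSet) = ∅
    · rw [if_pos hFi, if_pos ⟨isRootedSubtree_empty (Γ i) A, by rw [hFi]⟩,
        Finset.card_empty, pow_zero]
    · rw [if_neg hFi, if_neg]
      intro hc
      exact hFi (Finset.subset_empty.mp hc.2)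
  have hprodsplit : ∀ i : Fin n, (∏ j, ∑ X : Finset (Sym2 V), ψ i j X)
      = (if (F.filter fun e => e ∈ (Γ i).edgeSet) = ∅ then 1 else 0)
        * ∏ j ∈ Finset.univ.erase i, a j := by
    intro i
    rw [← Finset.mul_prod_erase Finset.univ _ (Finset.mem_univ i)]
    rw [hsum_eq i]
    congr 1
    exact Finset.prod_congr rfl fun j hj => hsum_ne i j (Finset.ne_of_mem_erase hj)
  rw [Finset.sum_congr rfl fun i _ => hprodsplit i]
  have hstep2 : (∑ i : Fin n, (if (F.filter fun e => e ∈ (Γ i).edgeSet) = ∅ then (1 : ℤ) else 0)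
        * ∏ j ∈ Finset.univ.erase i, a j)
      = ∑ i ∈ Iᶜ, ∏ j ∈ Finset.univ.erase i, a j := by
    have e1 : ∀ i : Fin n,
        (if (F.filter fun e => e ∈ (Γ i).edgeSet) = ∅ then (1 : ℤ) else 0)
          * ∏ j ∈ Finset.univ.erase i, a j
        = if i ∈ Iᶜ then ∏ j ∈ Finset.univ.erase i, a j else 0 := by
      intro i
      by_cases hc : (F.filter fun e => e ∈ (Γ i).edgeSet) = ∅
      · rw [if_pos hc, one_mul, if_pos ((hIc i).mp hc)]
      · rw [if_neg hc, zero_mul, if_neg (fun hmem => hc ((hIc i).mpr hmem))]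
    rw [Finset.sum_congr rfl fun i _ => e1 i, ← Finset.sum_filter]
    congr 1
    ext i
    simp
  rw [hstep2]
  have hsplitI : ∀ i ∈ Iᶜ, (∏ j ∈ Finset.univ.erase i, a j)
      = (∏ j ∈ I, a j) * ∏ j ∈ Iᶜ.erase i, a j := by
    intro i hi
    have hdisjI : Disjoint I (Iᶜ.erase i) :=
      Disjoint.mono_right (Finset.erase_subset _ _) disjoint_compl_right
    have huni : Finset.univ.erase i = I ∪ Iᶜ.erase i := by
      ext j
      simp only [Finset.mem_erase, Finset.mem_univ, and_true, Finset.mem_union, Finset.mem_compl]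
      constructor
      · intro hj
        by_cases hjI : j ∈ I
        · exact Or.inl hjI
        · exact Or.inr ⟨hj, hjI⟩
      · rintro (hjI | ⟨hj, -⟩)
        · rintro rfl
          exact (Finset.mem_compl.mp hi) hjI
        · exact hj
    rw [huni, Finset.prod_union hdisjI]
  rw [Finset.sum_congr rfl hsplitI]
  have haI : ∀ j ∈ I, a j = (-1 : ℤ) ^ (F.filter fun e => e ∈ (Γ j).edgeSet).card
      * zrel (Γ j) A (F.filter fun e => e ∈ (Γ j).edgeSet) := by
    intro j hj
    have hFj : (F.filter fun e => e ∈ (Γ j).edgeSet).Nonempty := by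
      rw [hIdef, Finset.mem_filter] at hj
      rw [Finset.filter_nonempty_iff]
      exact hj.2
    have hz : zrel (Γ j) A (F.filter fun e => e ∈ (Γ j).edgeSet)
        = (-1 : ℤ) ^ (F.filter fun e => e ∈ (Γ j).edgeSet).card * a j := by
      simp only [zrel, hadef]
      congr 1
      refine Finset.sum_congr rfl fun X _ => ?_
      refine if_congr ?_ rfl rfl
      constructor
      · rintro ⟨-, h2, h3⟩
        exact ⟨h3, h2⟩
      · rintro ⟨h1, h2⟩
        exact ⟨hFj.mono h2, h2, h1⟩
    rw [hz, ← mul_assoc, ← pow_add]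
    have heven : Even ((F.filter fun e => e ∈ (Γ j).edgeSet).card
        + (F.filter fun e => e ∈ (Γ j).edgeSet).card) := ⟨_, rfl⟩
    rw [heven.neg_one_pow, one_mul]
  have hsumcards : (∑ j ∈ I, (F.filter fun e => e ∈ (Γ j).edgeSet).card) = F.card := by
    have hful := card_filter_sum (F' := F) hdisj hcover hFE
    rw [← hful]
    apply Finset.sum_subset (Finset.subset_univ I)
    intro j _ hj
    have h6 : (F.filter fun e => e ∈ (Γ j).edgeSet) = ∅ :=
      (hIc j).mpr (Finset.mem_compl.mpr hj)
    rw [h6, Finset.card_empty]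
  have hprodI : (∏ j ∈ I, a j) = (-1 : ℤ) ^ F.card
      * ∏ j ∈ I, zrel (Γ j) A (F.filter fun e => e ∈ (Γ j).edgeSet) := by
    rw [Finset.prod_congr rfl haI, Finset.prod_mul_distrib]
    congr 1
    rw [Finset.prod_pow_eq_pow_sum, hsumcards]
  have haIc : ∀ j ∈ Iᶜ, a j = 1 + zrel (Γ j) A ∅ := by
    intro j hj
    have hFj : (F.filter fun e => e ∈ (Γ j).edgeSet) = ∅ := (hIc j).mpr hj
    have ha2 : a j = ∑ X : Finset (Sym2 V),
        if IsRootedSubtree (Γ j) A ↑X then (-1 : ℤ) ^ X.card else 0 := by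
      simp only [hadef]
      refine Finset.sum_congr rfl fun X _ => ?_
      refine if_congr ?_ rfl rfl
      rw [hFj]
      exact and_iff_left (Finset.empty_subset X)
    have hz : zrel (Γ j) A ∅ = ∑ X ∈ Finset.univ.erase (∅ : Finset (Sym2 V)),
        if IsRootedSubtree (Γ j) A ↑X then (-1 : ℤ) ^ X.card else 0 := by
      simp only [zrel, Finset.card_empty, pow_zero, one_mul]
      rw [← Finset.sum_subset (Finset.subset_univ (Finset.univ.erase (∅ : Finset (Sym2 V))))
        (fun X _ hX => ?_)]
      · refine Finset.sum_congr rfl fun X hX => ?_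
        refine if_congr ?_ rfl rfl
        have hne : X.Nonempty := Finset.nonempty_of_ne_empty (Finset.ne_of_mem_erase hX)
        constructor
        · rintro ⟨-, -, h⟩
          exact h
        · intro h
          exact ⟨hne, Finset.empty_subset X, h⟩
      · have : X = ∅ := by
          by_contra hX'
          exact hX (Finset.mem_erase.mpr ⟨hX', Finset.mem_univ X⟩)
        subst this
        rw [if_neg]
        rintro ⟨h1, -⟩
        exact Finset.not_nonempty_empty h1
    rw [ha2, ← Finset.add_sum_erase Finset.univ _ (Finset.mem_univ (∅ : Finset (Sym2 V)))]
    congr 1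
    · rw [if_pos (isRootedSubtree_empty (Γ j) A), Finset.card_empty, pow_zero]
    · exact hz.symm
  have hIle : I.card ≤ n := by
    simpa using Finset.card_le_univ I
  have hcardIc : Iᶜ.card = n - I.card := by
    rw [Finset.card_compl, Fintype.card_fin]
  have hfinal : (∑ i ∈ Iᶜ, (∏ j ∈ I, a j) * ∏ j ∈ Iᶜ.erase i, a j)
      = ((-1 : ℤ) ^ F.card * ∏ j ∈ I, zrel (Γ j) A (F.filter fun e => e ∈ (Γ j).edgeSet))
        * ∑ i ∈ Iᶜ, ∏ j ∈ Iᶜ.erase i, (1 + zrel (Γ j) A ∅) := by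
    rw [Finset.mul_sum]
    refine Finset.sum_congr rfl fun i hi => ?_
    rw [hprodI]
    congr 1
    refine Finset.prod_congr rfl fun j hj => ?_
    exact haIc j (Finset.mem_of_mem_erase hj)
  rw [hfinal]
  rw [sym_id Iᶜ (fun j => zrel (Γ j) A ∅)]
  have hsq : (-1 : ℤ) ^ F.card * (-1 : ℤ) ^ F.card = 1 := by
    rw [← pow_add]
    exact (Even.neg_one_pow ⟨F.card, rfl⟩)
  have hcast : ∀ j : ℕ, (((n - I.card : ℕ) : ℤ) - (j : ℤ)) = (n : ℤ) - (I.card : ℤ) - (j : ℤ) := by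
    intro j
    rw [Nat.cast_sub hIle]
  rw [hcardIc]
  rw [Finset.sum_congr rfl (fun j _ => by rw [hcast j])]
  rw [show ∀ x y : ℤ, (-1 : ℤ) ^ F.card * (((-1 : ℤ) ^ F.card * x) * y) = x * y from
    fun x y => by rw [show (-1 : ℤ) ^ F.card * (((-1 : ℤ) ^ F.card * x) * y)
      = ((-1 : ℤ) ^ F.card * (-1 : ℤ) ^ F.card) * (x * y) from by ring, hsq, one_mul]]

end Graph







end BAux

open scoped Classical in
/-- let `G` be a finite tree, `A` a vertex of degree `n` with incident edges
`e i = s(A, v i)` (`i : Fin n`), and `Γ i` the branch at `e i`, i.e. the maximal subtree of `G`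
containing `A` and the edge `e i` but none of the edges `e j`, `j ≠ i`.  For positive edge
weights `t` there is a constant `C` such that for all `T ≥ 0`,
`B(G, A, T) = Σ_{∅ ≠ F ⊆ E(G)} c_F · W((2 t_e)_{e ∈ F}; T) + C`. -/
theorem Bcount_eq_sum_cCoef_mul_Wfin {V : Type*} [Fintype V] [DecidableEq V]
    (G : SimpleGraph V) (hG : G.IsTree) (A : V)
    (n : ℕ) (v : Fin n → V) (hv : Function.Injective v)
    (hadj : ∀ i, G.Adj A (v i))
    (hall : ∀ w : V, G.Adj A w → ∃ i, w = v i)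
    (Γ : Fin n → SimpleGraph V)
    (hle : ∀ i, Γ i ≤ G)
    (hbranch : ∀ i, ∀ w : V, (Γ i).Adj A w ↔ w = v i)
    (hdisj : ∀ i j, i ≠ j → (Γ i).edgeSet ∩ (Γ j).edgeSet = ∅)
    (hcover : ∀ e ∈ G.edgeSet, ∃ i, e ∈ (Γ i).edgeSet)
    (hconn : ∀ i, ∀ w ∈ (Γ i).support, (Γ i).Reachable A w)
    (t : Sym2 V → ℝ) (ht : ∀ e ∈ G.edgeSet, 0 < t e) :
    ∃ C : ℤ, ∀ T : ℝ, 0 ≤ T →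
      Bcount G A t T =
        (∑ F : Finset (Sym2 V),
          if ↑F ⊆ G.edgeSet ∧ F.Nonempty then
            cCoef n Γ A F * (Wfin F t T : ℤ)
          else 0) + C := by
  classical
  have hdeg : (Nat.card {w : V | G.Adj A w} : ℤ) = (n : ℤ) := by
    have h1 : {w : V | G.Adj A w} = Set.range v := by
      ext w
      constructor
      · intro h
        obtain ⟨i, hi⟩ := hall w h
        exact ⟨i, hi.symm⟩
      · rintro ⟨i, rfl⟩
        exact hadj i
    rw [h1, Nat.card_range_of_injective hv, Nat.card_eq_fintype_card, Fintype.card_fin]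
  refine ⟨-(∑ F : Finset (Sym2 V),
    if (↑F : Set (Sym2 V)) ⊆ G.edgeSet ∧ F.Nonempty then cCoef n Γ A F else 0), ?_⟩
  intro T hT
  set D : Finset (Sym2 V) → ℤ := fun F => ((-1 : ℤ) ^ F.card) * (∑ F' : Finset (Sym2 V),
      if IsRootedSubtree G A ↑F' ∧ F ⊆ F' then
        ((n : ℤ) - ((F'.filter fun e => A ∈ e).card : ℤ)) * (-1 : ℤ) ^ F'.card
      else 0) with hD
  have hBc : Bcount G A t T = ∑ F : Finset (Sym2 V),
      if IsRootedSubtree G A ↑F ∧ F.Nonempty then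
        ((n : ℤ) - ((F.filter fun e => A ∈ e).card : ℤ)) * (BAux.Pcard F t T : ℤ)
      else 0 := by
    simp only [Bcount, BAux.Pcard, hdeg]
  have hpow : ∀ F : Finset (Sym2 V), F.powerset = Finset.univ.filter (· ⊆ F) := by
    intro F
    ext Y
    simp
  have hstepA : (∑ F : Finset (Sym2 V),
        if (↑F : Set (Sym2 V)) ⊆ G.edgeSet ∧ F.Nonempty then
          cCoef n Γ A F * (Wfin F t T : ℤ) else 0)
      = ∑ F : Finset (Sym2 V), ∑ X : Finset (Sym2 V),
          (if ((↑F : Set (Sym2 V)) ⊆ G.edgeSet ∧ F.Nonempty) ∧ X ⊆ F then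
            D F * (BAux.Pcard X t T : ℤ) else 0) := by
    refine Finset.sum_congr rfl fun F _ => ?_
    by_cases hg : (↑F : Set (Sym2 V)) ⊆ G.edgeSet ∧ F.Nonempty
    · rw [if_pos hg]
      have hc : cCoef n Γ A F = D F := by
        rw [hD]
        exact (BAux.dF_eq hG hv hle hbranch hdisj hcover hconn hg.1 hg.2).symm
      have hw : (Wfin F t T : ℤ) = ∑ X ∈ F.powerset, (BAux.Pcard X t T : ℤ) := by
        have h0 : Wfin F t T = ∑ X ∈ F.powerset, BAux.Pcard X t T :=
          BAux.Wfin_eq_sum F t (fun e he => ht e (hg.1 (Finset.mem_coe.mpr he))) T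
        rw [h0]
        push_cast
        rfl
      rw [hc, hw, Finset.mul_sum, hpow F, Finset.sum_filter]
      refine Finset.sum_congr rfl fun X _ => ?_
      by_cases hX : X ⊆ F
      · rw [if_pos hX, if_pos ⟨hg, hX⟩]
      · rw [if_neg hX, if_neg (fun h => hX h.2)]
    · rw [if_neg hg]
      symm
      exact Finset.sum_eq_zero fun X _ => if_neg (fun h => hg h.1)
  have key : (∑ F : Finset (Sym2 V),
        if (↑F : Set (Sym2 V)) ⊆ G.edgeSet ∧ F.Nonempty then
          cCoef n Γ A F * (Wfin F t T : ℤ) else 0)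
      = ∑ X : Finset (Sym2 V),
          (∑ F : Finset (Sym2 V),
            if ((↑F : Set (Sym2 V)) ⊆ G.edgeSet ∧ F.Nonempty) ∧ X ⊆ F then D F else 0)
            * (BAux.Pcard X t T : ℤ) := by
    rw [hstepA, Finset.sum_comm]
    refine Finset.sum_congr rfl fun X _ => ?_
    rw [Finset.sum_mul]
    refine Finset.sum_congr rfl fun F _ => ?_
    rw [ite_mul, zero_mul]
  have hmob : ∀ X : Finset (Sym2 V), X.Nonempty →
      (∑ F : Finset (Sym2 V),
        if ((↑F : Set (Sym2 V)) ⊆ G.edgeSet ∧ F.Nonempty) ∧ X ⊆ F then D F else 0)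
      = (if IsRootedSubtree G A ↑X then
          ((n : ℤ) - ((X.filter fun e => A ∈ e).card : ℤ)) else 0) := by
    intro X hXne
    simp only [hD]
    exact BAux.mobius G A n hXne
  have hNe : (∑ F : Finset (Sym2 V),
      if ((↑F : Set (Sym2 V)) ⊆ G.edgeSet ∧ F.Nonempty) ∧ (∅ : Finset (Sym2 V)) ⊆ F then
        D F else 0)
      = ∑ F : Finset (Sym2 V),
        if (↑F : Set (Sym2 V)) ⊆ G.edgeSet ∧ F.Nonempty then cCoef n Γ A F else 0 := by
    refine Finset.sum_congr rfl fun F _ => ?_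
    by_cases hg : (↑F : Set (Sym2 V)) ⊆ G.edgeSet ∧ F.Nonempty
    · rw [if_pos ⟨hg, Finset.empty_subset F⟩, if_pos hg]
      rw [hD]
      exact BAux.dF_eq hG hv hle hbranch hdisj hcover hconn hg.1 hg.2
    · rw [if_neg (fun h => hg h.1), if_neg hg]
  have hPe : (BAux.Pcard (∅ : Finset (Sym2 V)) t T : ℤ) = 1 := by
    exact_mod_cast BAux.Pcard_empty t hT
  have hsplit : (∑ X : Finset (Sym2 V),
        (∑ F : Finset (Sym2 V),
          if ((↑F : Set (Sym2 V)) ⊆ G.edgeSet ∧ F.Nonempty) ∧ X ⊆ F then D F else 0)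
          * (BAux.Pcard X t T : ℤ))
      = (∑ F : Finset (Sym2 V),
          if ((↑F : Set (Sym2 V)) ⊆ G.edgeSet ∧ F.Nonempty) ∧ (∅ : Finset (Sym2 V)) ⊆ F then
            D F else 0) * (BAux.Pcard (∅ : Finset (Sym2 V)) t T : ℤ)
        + ∑ X ∈ Finset.univ.erase (∅ : Finset (Sym2 V)),
            (∑ F : Finset (Sym2 V),
              if ((↑F : Set (Sym2 V)) ⊆ G.edgeSet ∧ F.Nonempty) ∧ X ⊆ F then D F else 0)
              * (BAux.Pcard X t T : ℤ) :=
    (Finset.add_sum_erase _ _ (Finset.mem_univ _)).symm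
  have herase : (∑ X ∈ Finset.univ.erase (∅ : Finset (Sym2 V)),
        (∑ F : Finset (Sym2 V),
          if ((↑F : Set (Sym2 V)) ⊆ G.edgeSet ∧ F.Nonempty) ∧ X ⊆ F then D F else 0)
          * (BAux.Pcard X t T : ℤ))
      = ∑ X ∈ Finset.univ.erase (∅ : Finset (Sym2 V)),
          (if IsRootedSubtree G A ↑X ∧ X.Nonempty then
            ((n : ℤ) - ((X.filter fun e => A ∈ e).card : ℤ)) * (BAux.Pcard X t T : ℤ)
          else 0) := by
    refine Finset.sum_congr rfl fun X hX => ?_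
    have hXne : X.Nonempty := Finset.nonempty_of_ne_empty (Finset.ne_of_mem_erase hX)
    rw [hmob X hXne]
    by_cases hR : IsRootedSubtree G A ↑X
    · rw [if_pos hR, if_pos ⟨hR, hXne⟩]
    · rw [if_neg hR, zero_mul, if_neg (fun h => hR h.1)]
  have hBc2 : Bcount G A t T = ∑ X ∈ Finset.univ.erase (∅ : Finset (Sym2 V)),
      (if IsRootedSubtree G A ↑X ∧ X.Nonempty then
        ((n : ℤ) - ((X.filter fun e => A ∈ e).card : ℤ)) * (BAux.Pcard X t T : ℤ)
      else 0) := by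
    rw [hBc]
    refine (Finset.sum_erase _ ?_).symm
    rw [if_neg]
    rintro ⟨-, h⟩
    exact Finset.not_nonempty_empty h
  rw [key, hsplit, hPe, mul_one, hNe, herase, ← hBc2]
  ring
end
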